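/- Let Q be a finitely splitting lim-sup tree forcing. For every T ∈ Q there is a strictly increasing f : ω → ω such that T has full splitting with respect to f: for all n ∈ ω and all t ∈ T of length f(n+1), there is s ≼ t of length at least f(n) with μ_T(s) > n. -/
import Mathlib


namespace Sacch

/-- The length-`n` initial segment of an infinite sequence, as a list. -/
def restr (b : ℕ → ℕ) (n : ℕ) : List ℕ := List.ofFn fun i : Fin n => b i

/-- A tree on ω: a set of finite sequences closed under initial segments. -/
def IsTree (T : Set (List ℕ)) : Prop :=
  ∀ s t : List ℕ, s <+: t → t ∈ T → s ∈ T

/-- The set of immediate successors of `t` in `T`. -/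
def succs (T : Set (List ℕ)) (t : List ℕ) : Set (List ℕ) :=
  {s | s ∈ T ∧ ∃ k : ℕ, s = t ++ [k]}

/-- `T` is finitely splitting: every node has finitely many immediate successors. -/
def FinSplit (T : Set (List ℕ)) : Prop :=
  ∀ t ∈ T, (succs T t).Finite

/-- `b` is a chain in `T`: a pairwise `≼`-comparable subset of `T`. -/
def IsChainIn (T b : Set (List ℕ)) : Prop :=
  b ⊆ T ∧ ∀ s ∈ b, ∀ t ∈ b, s <+: t ∨ t <+: s

/-- `b` is a branch of `T`: a maximal chain. -/
def IsBranch (T b : Set (List ℕ)) : Prop :=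
  IsChainIn T b ∧ ∀ b', IsChainIn T b' → b ⊆ b' → b' = b

/-- `A` is an antichain: pairwise `≼`-incomparable. -/
def IsAntichainIn (A : Set (List ℕ)) : Prop :=
  ∀ s ∈ A, ∀ t ∈ A, s ≠ t → ¬(s <+: t ∨ t <+: s)

/-- `F` is a front of `T`: an antichain in `T` meeting every branch of `T`. -/
def IsFront (T F : Set (List ℕ)) : Prop :=
  F ⊆ T ∧ IsAntichainIn F ∧ ∀ b, IsBranch T b → ∃ t ∈ b, t ∈ F

/-- The norm `μ_T(t)` of a node `t` in a subtree `T`: the `μ`-value of its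
set of immediate `T`-successors. -/
noncomputable def normOf (μ : List ℕ → Set (List ℕ) → ℝ)
    (T : Set (List ℕ)) (t : List ℕ) : ℝ := μ t (succs T t)

/-- Along the branch `b` of `T`, `limsup μ_T(b ↾ n) = ∞`. -/
def BranchLimsupInf (μ : List ℕ → Set (List ℕ) → ℝ)
    (T b : Set (List ℕ)) : Prop :=
  ∀ m : ℝ, ∀ N : ℕ, ∃ t ∈ b, N ≤ t.length ∧ m < normOf μ T t

/-- The standing assumptions on `(Tmax, μ)` making a finitely splitting
lim-sup tree forcing: `Tmax` is a nonempty finitely splitting tree, `μ`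
assigns non-negative reals monotonically to sets of successors, singletons
have norm `< 1` and along every branch of `Tmax` the limsup of the norms
is infinite. -/
structure LimSupForcing (Tmax : Set (List ℕ))
    (μ : List ℕ → Set (List ℕ) → ℝ) : Prop where
  tree : IsTree Tmax
  nonempty : Tmax.Nonempty
  finSplit : FinSplit Tmax
  mono : ∀ t : List ℕ, ∀ A B : Set (List ℕ), A ⊆ B → μ t A ≤ μ t B
  nonneg : ∀ t A, 0 ≤ μ t A
  singleton_lt_one : ∀ t s : List ℕ, μ t {s} < 1
  limsup : ∀ b, IsBranch Tmax b → BranchLimsupInf μ Tmax b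

/-- `T ∈ Q`: `T` is a condition of the lim-sup tree forcing `Q = Q(Tmax, μ)`,
i.e. a nonempty subtree of `Tmax` along each of whose branches the limsup of
the norms is infinite. -/
def memQ (Tmax : Set (List ℕ)) (μ : List ℕ → Set (List ℕ) → ℝ)
    (T : Set (List ℕ)) : Prop :=
  T.Nonempty ∧ T ⊆ Tmax ∧ IsTree T ∧
    ∀ b, IsBranch T b → BranchLimsupInf μ T b

/-- `T` is `n`-dense: there is a front of `T` all of whose nodes have
norm `> n`. -/
def nDense (μ : List ℕ → Set (List ℕ) → ℝ) (T : Set (List ℕ)) (n : ℕ) : Prop :=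
  ∃ F, IsFront T F ∧ ∀ t ∈ F, (n : ℝ) < normOf μ T t

end Sacch

namespace Sacch

/-- `t` is a splitting node of `T`: it has at least two immediate successors
in `T`. -/
def SplitNode (T : Set (List ℕ)) (t : List ℕ) : Prop :=
  ∃ s₁ ∈ succs T t, ∃ s₂ ∈ succs T t, s₁ ≠ s₂

/-- `T ∈ Q^f_A`: `T ∈ Q` and every splitting node of `T` has length in an
interval `[f n, f (n+1) - 1]` with `n ∈ A`. -/
def memQfA (Tmax : Set (List ℕ)) (μ : List ℕ → Set (List ℕ) → ℝ)
    (f : ℕ → ℕ) (A : Set ℕ) (T : Set (List ℕ)) : Prop :=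
  memQ Tmax μ T ∧
    ∀ t ∈ T, SplitNode T t → ∃ n ∈ A, f n ≤ t.length ∧ t.length < f (n + 1)

/-- `T` has full splitting with respect to `f`: for all `n` and all `t ∈ T`
of length `f (n+1)` there is `s ≼ t` of length at least `f n` with
`μ_T(s) > n`. -/
def FullSplit (μ : List ℕ → Set (List ℕ) → ℝ) (T : Set (List ℕ))
    (f : ℕ → ℕ) : Prop :=
  ∀ n : ℕ, ∀ t ∈ T, t.length = f (n + 1) →
    ∃ s, s <+: t ∧ f n ≤ s.length ∧ (n : ℝ) < normOf μ T s

end Sacch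

namespace Sacch

lemma key (Tmax : Set (List ℕ)) (μ : List ℕ → Set (List ℕ) → ℝ)
    (hFS : FinSplit Tmax) (T : Set (List ℕ)) (hT : memQ Tmax μ T)
    (n N : ℕ) : ∃ L, N < L ∧ ∀ t ∈ T, t.length = L →
      ∃ s, s <+: t ∧ N ≤ s.length ∧ (n : ℝ) < normOf μ T s := by
  obtain ⟨hne, hsub, htree, hlim⟩ := hT
  set B : Set (List ℕ) :=
    {t | t ∈ T ∧ ∀ s, s <+: t → N ≤ s.length → normOf μ T s ≤ (n : ℝ)} with hBdef
  have hBT : B ⊆ T := fun t ht => ht.1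
  have hBclosed : ∀ t ∈ B, ∀ s, s <+: t → s ∈ B := by
    rintro t ⟨htT, hts⟩ s hst
    exact ⟨htree s t hst htT, fun r hrs hr => hts r (hrs.trans hst) hr⟩
  have hbdd : ∃ L, ∀ t ∈ B, t.length < L := by
    by_contra hub
    push_neg at hub
    set Good : List ℕ → Prop :=
      fun t => t ∈ B ∧ ∀ L, ∃ u ∈ B, t <+: u ∧ L ≤ u.length with hGood
    have hnil : Good [] := by
      obtain ⟨t, htB, _⟩ := hub 0
      exact ⟨hBclosed t htB [] List.nil_prefix,
        fun L => by obtain ⟨u, huB, hlen⟩ := hub L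
                    exact ⟨u, huB, List.nil_prefix, hlen⟩⟩
    have hstep : ∀ t, Good t → ∃ k, Good (t ++ [k]) := by
      rintro t ⟨htB, htu⟩
      by_contra hk
      push_neg at hk
      have hSfin : (succs B t).Finite := by
        apply (hFS t (hsub (hBT htB))).subset
        rintro s ⟨hsB, k, rfl⟩
        exact ⟨hsub (hBT hsB), k, rfl⟩
      have hbound : ∀ s : succs B t, ∃ M : ℕ,
          ∀ u ∈ B, (s : List ℕ) <+: u → u.length < M := by
        rintro ⟨s, hsB, k, rfl⟩
        have h1 := hk k
        rw [hGood] at h1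
        simp only [not_and, not_forall] at h1
        obtain ⟨L, hL⟩ := h1 hsB
        push_neg at hL
        exact ⟨L, fun u huB hpre => hL u huB hpre⟩
      choose M hM using hbound
      have := hSfin.to_subtype
      obtain ⟨Mx, hMx⟩ := Finite.exists_le M
      obtain ⟨u, huB, htu', hulen⟩ := htu (max Mx (t.length + 1))
      have hlen' : t.length + 1 ≤ u.length := le_trans (le_max_right _ _) hulen
      set p := u.take (t.length + 1) with hp
      have hpu : p <+: u := List.take_prefix _ _
      have hpB : p ∈ B := hBclosed u huB p hpu
      have h1 : t = u.take t.length := List.prefix_iff_eq_take.mp htu'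
      obtain ⟨k, hpk⟩ : ∃ k, p = t ++ [k] := by
        have h2 : u[t.length]? = some u[t.length] :=
          List.getElem?_eq_getElem (by omega)
        rw [hp, List.take_succ, ← h1, h2]
        exact ⟨_, rfl⟩
      have hpS : p ∈ succs B t := ⟨hpB, k, hpk⟩
      have := hM ⟨p, hpS⟩ u huB hpu
      have := hMx ⟨p, hpS⟩
      omega
    let g : ℕ → {t : List ℕ // Good t} := fun k =>
      Nat.rec ⟨[], hnil⟩
        (fun _ ih => ⟨ih.1 ++ [Classical.choose (hstep ih.1 ih.2)],
          Classical.choose_spec (hstep ih.1 ih.2)⟩) k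
    have hgsucc : ∀ k, (g (k + 1)).1
        = (g k).1 ++ [Classical.choose (hstep (g k).1 (g k).2)] := fun _ => rfl
    have hglen : ∀ k, (g k).1.length = k := by
      intro k
      induction k with
      | zero => rfl
      | succ k ih => rw [hgsucc, List.length_append, ih]; rfl
    have hgmono : ∀ j k, j ≤ k → (g j).1 <+: (g k).1 := by
      intro j k hjk
      induction hjk with
      | refl => exact List.prefix_refl _
      | step _ ih => exact ih.trans (by rw [hgsucc]; exact List.prefix_append _ _)
    set b : Set (List ℕ) := Set.range fun k => (g k).1 with hb
    have hbB : b ⊆ B := by rintro t ⟨k, rfl⟩; exact (g k).2.1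
    have hchain : IsChainIn T b := by
      constructor
      · exact fun t ht => hBT (hbB ht)
      · rintro s ⟨j, rfl⟩ t ⟨k, rfl⟩
        rcases le_total j k with h' | h'
        · exact Or.inl (hgmono j k h')
        · exact Or.inr (hgmono k j h')
    have hbranch : IsBranch T b := by
      refine ⟨hchain, fun b' hb' hbb' => Set.Subset.antisymm ?_ hbb'⟩
      intro t ht
      have hgt : (g t.length).1 ∈ b' := hbb' ⟨t.length, rfl⟩
      rcases hb'.2 t ht _ hgt with hc | hc
      · have := hc.eq_of_length_le (by rw [hglen])
        rw [this]; exact ⟨t.length, rfl⟩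
      · have := hc.eq_of_length_le (by rw [hglen])
        rw [← this]; exact ⟨t.length, rfl⟩
    obtain ⟨t, htb, hNt, hnorm⟩ := hlim b hbranch (n : ℝ) N
    have htB := hbB htb
    exact absurd (htB.2 t (List.prefix_refl t) hNt) (not_le.mpr hnorm)
  obtain ⟨L, hL⟩ := hbdd
  refine ⟨max L (N + 1), lt_of_lt_of_le (Nat.lt_succ_self N) (le_max_right _ _), ?_⟩
  intro t htT hlen
  by_contra hcon
  push_neg at hcon
  have htB : t ∈ B := ⟨htT, hcon⟩
  have := hL t htB
  omega


end Sacch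

open Sacch in
/-- For every `T ∈ Q` there is a strictly increasing `f : ω → ω` such that
`T` has full splitting with respect to `f`. -/
theorem exists_fullSplit (Tmax : Set (List ℕ)) (μ : List ℕ → Set (List ℕ) → ℝ)
    (h : LimSupForcing Tmax μ) (T : Set (List ℕ)) (hT : memQ Tmax μ T) :
    ∃ f : ℕ → ℕ, StrictMono f ∧ FullSplit μ T f := by
  choose L hL1 hL2 using fun n N => key Tmax μ h.finSplit T hT n N
  let f : ℕ → ℕ := fun n => Nat.rec 0 (fun k ih => L k ih) n
  have hfs : ∀ n, f (n + 1) = L n (f n) := fun _ => rfl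
  refine ⟨f, strictMono_nat_of_lt_succ fun n => ?_, fun n t htT hlen => ?_⟩
  · rw [hfs]; exact hL1 n (f n)
  · exact hL2 n (f n) t htT (by rw [← hfs]; exact hlen)
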